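/- Let A be an n×n real symmetric matrix with ‖A‖_∞ ≤ 1. Let A_o = V_o Λ_o V_oᵀ be the projection of A onto the span of eigenvectors with eigenvalue magnitude at least εn. Then every entry of A_o satisfies |(A_o)_{ij}| ≤ 1/ε. -/

import Mathlib

open Matrix Finset

/-- `V Vᵀ` is a contraction: `‖Vᵀ a‖² ≤ ‖a‖²` when `VᵀV = 1`. -/
lemma key_contraction {n r : ℕ} (V : Matrix (Fin n) (Fin r) ℝ)
    (horth : Vᵀ * V = 1) (a : Fin n → ℝ) :
    ∑ k, (∑ m, a m * V m k) ^ 2 ≤ ∑ m, (a m) ^ 2 := by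
  set g : Fin r → ℝ := fun k => ∑ m, a m * V m k with hg
  have hgv : g = a ᵥ* V := by
    funext k; simp [hg, Matrix.vecMul, dotProduct]
  set S : ℝ := ∑ k, g k ^ 2 with hS
  have hSnn : 0 ≤ S := Finset.sum_nonneg fun _ _ => sq_nonneg _
  -- h = V g has ‖h‖² = S and ⟨a, h⟩ = S
  set h : Fin n → ℝ := V *ᵥ g with hh
  have hgg : g ⬝ᵥ g = S := by
    simp [hS, dotProduct, sq]
  have hah : a ⬝ᵥ h = S := by
    rw [hh, dotProduct_mulVec, ← hgv, hgg]
  have hhh : h ⬝ᵥ h = S := by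
    rw [hh, dotProduct_mulVec]
    have : (V *ᵥ g) ᵥ* V = g := by
      have h1 : (V *ᵥ g) ᵥ* V = Vᵀ *ᵥ (V *ᵥ g) := by
        rw [← Matrix.transpose_transpose V, Matrix.vecMul_transpose,
          Matrix.transpose_transpose]
      rw [h1, Matrix.mulVec_mulVec, horth, Matrix.one_mulVec]
    rw [this, hgg]
  -- Cauchy-Schwarz: S² = (a ⬝ᵥ h)² ≤ (∑ a²)(∑ h²) = (∑ a²) S
  have hcs : S ^ 2 ≤ (∑ m, (a m) ^ 2) * S := by
    calc S ^ 2 = (∑ m, a m * h m) ^ 2 := by rw [← hah]; rfl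
    _ ≤ (∑ m, (a m) ^ 2) * ∑ m, (h m) ^ 2 :=
        Finset.sum_mul_sq_le_sq_mul_sq _ _ _
    _ = (∑ m, (a m) ^ 2) * S := by
        congr 1; rw [← hhh]; simp [dotProduct, sq]
  rcases eq_or_lt_of_le hSnn with hS0 | hS0
  · rw [← hS0]; exact Finset.sum_nonneg fun _ _ => sq_nonneg _
  · nlinarith [hcs]

/-- **Entrywise bound on the outlying part `A_o = V Λ Vᵀ`.**
If `A` is an `n × n` real symmetric matrix with entries bounded by `1` in magnitude,
and `V` has orthonormal columns which are eigenvectors of `A` for eigenvalues `lam j`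
with `|lam j| ≥ ε n`, then every entry of `A_o = V * diagonal lam * Vᵀ` has magnitude
at most `1 / ε`. -/
theorem outlying_part_entry_bound
    (n r : ℕ) (A : Matrix (Fin n) (Fin n) ℝ) (ε : ℝ)
    (hA : A.IsHermitian)
    (hbound : ∀ i j, |A i j| ≤ 1)
    (hε : ε ∈ Set.Ioo (0 : ℝ) 1)
    (V : Matrix (Fin n) (Fin r) ℝ) (lam : Fin r → ℝ)
    (horth : Vᵀ * V = 1)
    (heig : ∀ j : Fin r, A.mulVec (fun i => V i j) = fun i => lam j * V i j)
    (hlam : ∀ j : Fin r, ε * n ≤ |lam j|) :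
    ∀ i j : Fin n, |(V * Matrix.diagonal lam * Vᵀ) i j| ≤ 1 / ε := by
  intro i j
  have hn : (0 : ℝ) < n := by
    have : 0 < n := i.pos
    exact_mod_cast this
  have hεn : (0 : ℝ) < ε * n := mul_pos hε.1 hn
  -- key bound: ∑ₖ (lam k * V i k)² ≤ n for each row i
  have hkey : ∀ i : Fin n, ∑ k, (lam k * V i k) ^ 2 ≤ (n : ℝ) := by
    intro i
    have h1 : ∀ k, lam k * V i k = ∑ m, A i m * V m k := by
      intro k
      have := congrFun (heig k) i
      simpa [Matrix.mulVec, dotProduct] using this.symm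
    calc ∑ k, (lam k * V i k) ^ 2 = ∑ k, (∑ m, A i m * V m k) ^ 2 := by
          simp_rw [h1]
    _ ≤ ∑ m, (A i m) ^ 2 := key_contraction V horth _
    _ ≤ ∑ _m : Fin n, (1 : ℝ) := by
        apply Finset.sum_le_sum
        intro m _
        have := hbound i m
        nlinarith [abs_nonneg (A i m), sq_abs (A i m)]
    _ = (n : ℝ) := by simp
  -- entry formula
  have hentry : (V * Matrix.diagonal lam * Vᵀ) i j = ∑ k, V i k * lam k * V j k := by
    simp [Matrix.mul_apply, Matrix.diagonal, Finset.sum_mul]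
  rw [hentry]
  -- T := ∑ₖ (|lam k| |V i k|)(|lam k| |V j k|) ≤ n by Cauchy–Schwarz
  set T : ℝ := ∑ k, (|lam k| * |V i k|) * (|lam k| * |V j k|) with hT
  have hTnn : 0 ≤ T := Finset.sum_nonneg fun k _ =>
    mul_nonneg (mul_nonneg (abs_nonneg _) (abs_nonneg _))
      (mul_nonneg (abs_nonneg _) (abs_nonneg _))
  have hTle : T ≤ (n : ℝ) := by
    have hcs : T ^ 2 ≤ (∑ k, (|lam k| * |V i k|) ^ 2) * ∑ k, (|lam k| * |V j k|) ^ 2 :=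
      Finset.sum_mul_sq_le_sq_mul_sq _ _ _
    have hi' : ∑ k, (|lam k| * |V i k|) ^ 2 ≤ (n : ℝ) := by
      refine le_trans (le_of_eq ?_) (hkey i)
      apply Finset.sum_congr rfl; intro k _
      rw [mul_pow, sq_abs, sq_abs, ← mul_pow]
    have hj' : ∑ k, (|lam k| * |V j k|) ^ 2 ≤ (n : ℝ) := by
      refine le_trans (le_of_eq ?_) (hkey j)
      apply Finset.sum_congr rfl; intro k _
      rw [mul_pow, sq_abs, sq_abs, ← mul_pow]
    have h2 : T ^ 2 ≤ (n : ℝ) ^ 2 := by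
      refine hcs.trans ?_
      have hnn1 : (0:ℝ) ≤ ∑ k, (|lam k| * |V i k|) ^ 2 :=
        Finset.sum_nonneg fun _ _ => sq_nonneg _
      have hnn2 : (0:ℝ) ≤ ∑ k, (|lam k| * |V j k|) ^ 2 :=
        Finset.sum_nonneg fun _ _ => sq_nonneg _
      calc _ ≤ (n:ℝ) * ∑ k, (|lam k| * |V j k|) ^ 2 :=
            mul_le_mul_of_nonneg_right hi' hnn2
      _ ≤ (n:ℝ) * n := mul_le_mul_of_nonneg_left hj' hn.le
      _ = (n:ℝ)^2 := (sq (n:ℝ)).symm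
    nlinarith [h2, hTnn, hn.le]
  -- per-term bound |lam k| ≤ lam k² / (ε n)
  have hlam' : ∀ k : Fin r, |lam k| ≤ lam k ^ 2 / (ε * n) := by
    intro k
    rw [le_div_iff₀ hεn]
    have h := hlam k
    calc |lam k| * (ε * n) ≤ |lam k| * |lam k| :=
          mul_le_mul_of_nonneg_left h (abs_nonneg _)
    _ = lam k ^ 2 := by rw [← sq_abs]; ring
  calc |∑ k, V i k * lam k * V j k| ≤ ∑ k, |V i k * lam k * V j k| :=
        Finset.abs_sum_le_sum_abs _ _
  _ = ∑ k, |lam k| * (|V i k| * |V j k|) := by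
      apply Finset.sum_congr rfl; intro k _
      rw [abs_mul, abs_mul]; ring
  _ ≤ ∑ k, (lam k ^ 2 / (ε * n)) * (|V i k| * |V j k|) := by
      apply Finset.sum_le_sum; intro k _
      exact mul_le_mul_of_nonneg_right (hlam' k)
        (mul_nonneg (abs_nonneg _) (abs_nonneg _))
  _ = (1 / (ε * n)) * T := by
      rw [hT, Finset.mul_sum]
      apply Finset.sum_congr rfl; intro k _
      field_simp; rw [← sq_abs (lam k)]; ring
  _ ≤ (1 / (ε * n)) * n :=
      mul_le_mul_of_nonneg_left hTle (by positivity)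
  _ = 1 / ε := by
      field_simp
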